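/- For every n ≥ 2, the Euclidean space ℝ^n contains a dense additive subgroup G such that both G and its complement meet every uncountable closed subset of ℝ^n (i.e., G is a Bernstein set in ℝ^n). -/

import Mathlib

open Set Cardinal Submodule

def IsBernstein {n : ℕ} (B : Set (Fin n → ℝ)) : Prop :=
  ∀ F : Set (Fin n → ℝ), IsClosed F → ¬ F.Countable →
    (B ∩ F).Nonempty ∧ (Bᶜ ∩ F).Nonempty

namespace BernsteinAux

noncomputable section

variable {V : Type} [AddCommGroup V] [Module ℚ V]

lemma mk_span_le (s : Set V) : #(span ℚ s) ≤ max #s ℵ₀ := by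
  rcases s.eq_empty_or_nonempty with rfl | hs
  · simp only [Submodule.span_empty]
    have h1 : #(⊥ : Submodule ℚ V) ≤ 1 :=
      le_one_iff_subsingleton.2 inferInstance
    exact le_max_of_le_right (h1.trans one_le_aleph0)
  · have hsurj : Function.Surjective
        (fun f : (s →₀ ℚ) => (⟨Finsupp.linearCombination ℚ (Subtype.val : s → V) f,
          by
            have := Finsupp.range_linearCombination (R := ℚ) (v := (Subtype.val : s → V))
            have hmem : Finsupp.linearCombination ℚ (Subtype.val : s → V) f ∈
                LinearMap.range (Finsupp.linearCombination ℚ (Subtype.val : s → V)) :=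
              LinearMap.mem_range_self _ f
            rw [this, Subtype.range_coe] at hmem
            exact hmem⟩ : span ℚ s)) := by
      rintro ⟨x, hx⟩
      have : x ∈ span ℚ (Set.range (Subtype.val : s → V)) := by rwa [Subtype.range_coe]
      rw [← Finsupp.range_linearCombination] at this
      obtain ⟨f, hf⟩ := this
      exact ⟨f, by simp [hf]⟩
    calc #(span ℚ s) ≤ #(s →₀ ℚ) := mk_le_of_surjective hsurj
    _ ≤ max #s ℵ₀ := by
      haveI : Nonempty s := hs.to_subtype
      rw [mk_finsupp_of_infinite' s ℚ]
      exact max_le_max le_rfl (by simp [mk_denumerable])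

variable {ι : Type} (r : ι → ι → Prop) [IsWellOrder ι r]
  (e : ι → Set V) (D : Set V)

/-- The set of first coordinates chosen at earlier stages. -/
def Aprev (x : ι) (g : ∀ y, r y x → V × V) : Set V :=
  {v | ∃ y, ∃ h : r y x, (g y h).1 = v}

/-- The condition the pair chosen at stage `x` must satisfy. -/
def Cond (x : ι) (g : ∀ y, r y x → V × V) (p : V × V) : Prop :=
  p.1 ∈ e x ∧ p.2 ∈ e x ∧
  (∀ y (h : r y x), (g y h).2 ∉ span ℚ (insert p.1 (D ∪ Aprev r x g))) ∧
  p.2 ∉ span ℚ (insert p.1 (D ∪ Aprev r x g))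

open Classical in
/-- The transfinite recursion choosing a pair of points at each stage. -/
def bern : ι → V × V :=
  (IsWellFounded.wf (r := r)).fix fun x g =>
    if h : ∃ p, Cond r e D x g p then h.choose else (0, 0)

open Classical in
lemma bern_eq (x : ι) :
    bern r e D x =
      if h : ∃ p, Cond r e D x (fun y _ => bern r e D y) p then h.choose else (0, 0) :=
  WellFounded.fix_eq _ _ _

/-- The invariant at stage `x`. -/
def Inv (x : ι) : Prop :=
  (bern r e D x).1 ∈ e x ∧ (bern r e D x).2 ∈ e x ∧
  ∀ y, (r y x ∨ y = x) →
    (bern r e D y).2 ∉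
      span ℚ (D ∪ {v | ∃ w, (r w x ∨ w = x) ∧ (bern r e D w).1 = v})

/-- Any finite nonempty set has an `r`-maximum. -/
lemma exists_top (Z : Finset ι) (hZ : Z.Nonempty) :
    ∃ z ∈ Z, ∀ u ∈ Z, r u z ∨ u = z := by
  classical
  induction hZ using Finset.Nonempty.cons_induction with
  | singleton a => exact ⟨a, by simp⟩
  | cons a Z ha hZ ih =>
    obtain ⟨z, hzZ, hz⟩ := ih
    rcases trichotomous_of r a z with h | h | h
    · exact ⟨z, Finset.mem_cons_of_mem hzZ, by
        intro u hu
        rcases Finset.mem_cons.1 hu with rfl | hu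
        · exact Or.inl h
        · exact hz u hu⟩
    · exact ⟨z, Finset.mem_cons_of_mem hzZ, by
        intro u hu
        rcases Finset.mem_cons.1 hu with rfl | hu
        · exact Or.inr h
        · exact hz u hu⟩
    · refine ⟨a, Finset.mem_cons_self _ _, ?_⟩
      intro u hu
      rcases Finset.mem_cons.1 hu with rfl | hu
      · exact Or.inr rfl
      · rcases hz u hu with h' | rfl
        · exact Or.inl (_root_.trans h' h)
        · exact Or.inl h

/-- The key avoidance lemma: if the invariant holds at every stage satisfying `P`,
then the second point of any stage satisfying `P` avoids the span of `D` together
with all first points of stages satisfying `P`. -/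
lemma not_mem_span (P : ι → Prop) (hinv : ∀ z, P z → Inv r e D z) (y : ι) (hy : P y) :
    (bern r e D y).2 ∉ span ℚ (D ∪ {v | ∃ w, P w ∧ (bern r e D w).1 = v}) := by
  classical
  intro hmem
  obtain ⟨T, hT, hmemT⟩ := mem_span_finite_of_mem_span hmem
  set idx : V → ι := fun v => if h : ∃ w, P w ∧ (bern r e D w).1 = v then h.choose else y
    with hidx
  have hidxP : ∀ v, P (idx v) := by
    intro v
    simp only [hidx]
    split
    · next h => exact h.choose_spec.1
    · exact hy
  set Z : Finset ι := insert y (T.image idx) with hZ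
  obtain ⟨z, hzZ, hztop⟩ := exists_top r Z ⟨y, Finset.mem_insert_self _ _⟩
  have hPz : P z := by
    rcases Finset.mem_insert.1 hzZ with rfl | h
    · exact hy
    · obtain ⟨t, _, rfl⟩ := Finset.mem_image.1 h
      exact hidxP t
  have hTsub : (T : Set V) ⊆ D ∪ {v | ∃ w, (r w z ∨ w = z) ∧ (bern r e D w).1 = v} := by
    intro t ht
    rcases hT ht with htD | htA
    · exact Or.inl htD
    · right
      have hex : ∃ w, P w ∧ (bern r e D w).1 = t := htA
      have h1 : idx t = hex.choose := by rw [hidx]; simp [hex]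
      refine ⟨idx t, ?_, ?_⟩
      · exact hztop _ (Finset.mem_insert_of_mem (Finset.mem_image_of_mem idx ht))
      · rw [h1]; exact hex.choose_spec.2
  have : (bern r e D y).2 ∈
      span ℚ (D ∪ {v | ∃ w, (r w z ∨ w = z) ∧ (bern r e D w).1 = v}) :=
    span_mono hTsub hmemT
  exact (hinv z hPz).2.2 y (hztop y (Finset.mem_insert_self _ _)) this

theorem inv_all (hD : #D ≤ ℵ₀)
    (hsmall : ∀ x : ι, #{y // r y x} < 𝔠)
    (hbig : ∀ x : ι, 𝔠 ≤ #(e x)) : ∀ x : ι, Inv r e D x := by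
  intro x
  refine (IsWellFounded.wf (r := r)).induction x ?_
  clear x
  intro x ih
  classical
  set g : ∀ y, r y x → V × V := fun y _ => bern r e D y with hg
  set A0 : Set V := D ∪ Aprev r x g with hA0
  -- Step 1: previously chosen second points avoid the span of `A0`.
  have hstep1 : ∀ y, r y x → (bern r e D y).2 ∉ span ℚ A0 := by
    intro y hy hmem
    refine not_mem_span r e D (fun z => r z x) (fun z hz => ih z hz) y hy ?_
    refine span_mono ?_ hmem
    rintro v (hv | ⟨w, hw, rfl⟩)
    · exact Or.inl hv
    · exact Or.inr ⟨w, hw, rfl⟩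
  -- Step 2: cardinality bounds.
  have hspan : ∀ s : Set V, #s < 𝔠 → #(span ℚ s) < 𝔠 := fun s hs =>
    (mk_span_le s).trans_lt (max_lt hs aleph0_lt_continuum)
  have hA0card : #A0 < 𝔠 := by
    have h1 : #(Aprev r x g) ≤ #{y // r y x} := by
      have hsub : Aprev r x g ⊆ Set.range (fun p : {y // r y x} => (bern r e D p.1).1) := by
        rintro v ⟨y, h, rfl⟩
        exact ⟨⟨y, h⟩, rfl⟩
      exact (mk_le_mk_of_subset hsub).trans mk_range_le
    calc #A0 ≤ #D + #(Aprev r x g) := mk_union_le _ _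
    _ < 𝔠 := add_lt_of_lt aleph0_le_continuum (hD.trans_lt aleph0_lt_continuum)
        (h1.trans_lt (hsmall x))
  -- Step 3: the set of "bad" choices for the first point is small.
  set Bad : Set V := {a : V | ∃ y, r y x ∧ (bern r e D y).2 ∈ span ℚ (insert a A0)}
    with hBad
  have hbadcard : #Bad < 𝔠 := by
    set f : {y // r y x} × ℚ × (span ℚ A0) → V :=
      fun t => (t.2.1)⁻¹ • ((bern r e D t.1.1).2 - (t.2.2 : V)) with hf
    have hsub : Bad ⊆ Set.range f := by
      rintro a ⟨y, hy, hmem⟩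
      rw [mem_span_insert] at hmem
      obtain ⟨q, z, hz, hq⟩ := hmem
      have hq0 : q ≠ 0 := by
        rintro rfl
        rw [zero_smul, zero_add] at hq
        exact hstep1 y hy (hq ▸ hz)
      refine ⟨⟨⟨y, hy⟩, q, ⟨z, hz⟩⟩, ?_⟩
      simp only [hf]
      rw [hq]
      rw [add_sub_cancel_right, smul_smul, inv_mul_cancel₀ hq0, one_smul]
    calc #Bad ≤ #({y // r y x} × ℚ × (span ℚ A0)) :=
          (mk_le_mk_of_subset hsub).trans mk_range_le
    _ < 𝔠 := by
        rw [mk_prod, mk_prod, lift_id, lift_id, lift_id, lift_id]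
        refine mul_lt_of_lt aleph0_le_continuum (hsmall x) ?_
        refine mul_lt_of_lt aleph0_le_continuum ?_ (hspan _ hA0card)
        exact Cardinal.mkRat ▸ aleph0_lt_continuum
  -- Step 4: choose the pair.
  have hex_a : ∃ a ∈ e x, ∀ y, r y x → (bern r e D y).2 ∉ span ℚ (insert a A0) := by
    by_contra hcon
    push_neg at hcon
    have hsub : e x ⊆ Bad := by
      intro a ha
      obtain ⟨y, hy, hmem⟩ := hcon a ha
      exact ⟨y, hy, hmem⟩
    exact absurd ((hbig x).trans (mk_le_mk_of_subset hsub)) hbadcard.not_ge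
  obtain ⟨a, haex, ha⟩ := hex_a
  have hex_b : ∃ b ∈ e x, b ∉ span ℚ (insert a A0) := by
    by_contra hcon
    push_neg at hcon
    have hsub : e x ⊆ (span ℚ (insert a A0) : Set V) := hcon
    have hins : #(insert a A0 : Set V) < 𝔠 :=
      (mk_insert_le).trans_lt
        (add_lt_of_lt aleph0_le_continuum hA0card (one_lt_aleph0.trans aleph0_lt_continuum))
    exact absurd ((hbig x).trans (mk_le_mk_of_subset hsub)) (hspan _ hins).not_ge
  obtain ⟨b, hbex, hb⟩ := hex_b
  have hex : ∃ p, Cond r e D x (fun y _ => bern r e D y) p := by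
    refine ⟨(a, b), haex, hbex, ?_, ?_⟩
    · intro y hy
      exact ha y hy
    · exact hb
  have hcond : Cond r e D x (fun y _ => bern r e D y) (bern r e D x) := by
    rw [bern_eq, dif_pos hex]
    exact hex.choose_spec
  -- Step 5: derive the invariant.
  have hsetEq : (D ∪ {v | ∃ w, (r w x ∨ w = x) ∧ (bern r e D w).1 = v})
      = insert (bern r e D x).1 (D ∪ Aprev r x (fun y _ => bern r e D y)) := by
    ext v
    simp only [Set.mem_union, Set.mem_insert_iff, Set.mem_setOf_eq, Aprev]
    constructor
    · rintro (hv | ⟨w, (hw | rfl), rfl⟩)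
      · exact Or.inr (Or.inl hv)
      · exact Or.inr (Or.inr ⟨w, hw, rfl⟩)
      · exact Or.inl rfl
    · rintro (hv | hv | ⟨w, hw, rfl⟩)
      · exact Or.inr ⟨x, Or.inr rfl, hv.symm⟩
      · exact Or.inl hv
      · exact Or.inr ⟨w, Or.inl hw, rfl⟩
  refine ⟨hcond.1, hcond.2.1, ?_⟩
  intro y hy
  rw [hsetEq]
  rcases hy with hy | rfl
  · exact hcond.2.2.1 y hy
  · exact hcond.2.2.2

end
end BernsteinAux

open BernsteinAux

theorem stmt0 (n : ℕ) (hn : 2 ≤ n) :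
    ∃ G : AddSubgroup (Fin n → ℝ), Dense (G : Set (Fin n → ℝ)) ∧
      IsBernstein (G : Set (Fin n → ℝ)) := by
  classical
  haveI : Nonempty (Fin n) := ⟨⟨0, by omega⟩⟩
  have hι : #(ℕ → Bool) = 𝔠 := by
    rw [Cardinal.mk_arrow]
    simp only [Cardinal.mk_bool, Cardinal.lift_id, Cardinal.mk_nat, Cardinal.lift_ofNat,
      Cardinal.lift_aleph0]
    exact Cardinal.two_power_aleph0
  obtain ⟨r, wo, hr⟩ := Cardinal.ord_eq (ℕ → Bool)
  haveI := wo
  have hsmall : ∀ x : ℕ → Bool, #{y // r y x} < 𝔠 := by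
    intro x
    have h1 : #{y // r y x} = (Ordinal.typein r x).card := Ordinal.card_typein x
    have h2 := Cardinal.card_typein_lt (r := r) x hr
    rw [h1]
    rwa [hι] at h2
  -- the space is uncountable
  have hVbig : 𝔠 ≤ #(Fin n → ℝ) := by
    have := Cardinal.mk_le_of_injective
      (Function.const_injective : Function.Injective (Function.const (Fin n) : ℝ → Fin n → ℝ))
    rwa [Cardinal.mk_real] at this
  have hVunc : ¬ (Set.univ : Set (Fin n → ℝ)).Countable := by
    rw [Set.countable_univ_iff]
    intro h
    exact absurd (hVbig.trans Cardinal.mk_le_aleph0) Cardinal.aleph0_lt_continuum.not_ge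
  -- there are at most continuum many uncountable closed sets
  set T := {F : Set (Fin n → ℝ) // IsClosed F ∧ ¬ F.Countable} with hT
  haveI hTne : Nonempty T := ⟨⟨Set.univ, isClosed_univ, hVunc⟩⟩
  have hTle : #T ≤ 𝔠 := by
    obtain ⟨B, hBc, hBne, hB⟩ := TopologicalSpace.exists_countable_basis (Fin n → ℝ)
    have hΦ : Function.Injective (fun F : T => {s : B | (s : Set (Fin n → ℝ)) ⊆ (F : Set _)ᶜ}) := by
      intro F F' h
      have key : ∀ (F₁ F₂ : T),
          {s : B | (s : Set (Fin n → ℝ)) ⊆ (F₁ : Set _)ᶜ} =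
            {s : B | (s : Set (Fin n → ℝ)) ⊆ (F₂ : Set _)ᶜ} →
          ((F₁ : Set (Fin n → ℝ)))ᶜ ⊆ ((F₂ : Set (Fin n → ℝ)))ᶜ := by
        intro F₁ F₂ h12
        have h1 := hB.open_eq_sUnion' F₁.2.1.isOpen_compl
        rw [h1]
        rintro v ⟨s, ⟨hsB, hs⟩, hvs⟩
        have : (⟨s, hsB⟩ : B) ∈ {s : B | (s : Set (Fin n → ℝ)) ⊆ (F₂ : Set _)ᶜ} := by
          rw [← h12]; exact hs
        exact this hvs
      have h1 := key F F' h
      have h2 := key F' F h.symm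
      have : (F : Set (Fin n → ℝ)) = (F' : Set (Fin n → ℝ)) :=
        compl_injective (le_antisymm h1 h2)
      exact Subtype.ext this
    calc #T ≤ #(Set B) := Cardinal.mk_le_of_injective hΦ
    _ = 2 ^ #B := Cardinal.mk_set
    _ ≤ 2 ^ ℵ₀ := by
        refine Cardinal.power_le_power_left (by norm_num) ?_
        haveI := hBc.to_subtype
        exact Cardinal.mk_le_aleph0
    _ = 𝔠 := Cardinal.two_power_aleph0
  -- a surjective enumeration of the uncountable closed sets
  have hle : #T ≤ #(ℕ → Bool) := by rwa [hι]
  obtain ⟨j⟩ := (Cardinal.le_def _ _).1 hle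
  set e₀ : (ℕ → Bool) → T := Function.invFun j with he₀
  have hesurj : Function.Surjective e₀ := Function.invFun_surjective j.injective
  set e : (ℕ → Bool) → Set (Fin n → ℝ) := fun x => (e₀ x : Set (Fin n → ℝ)) with he
  have hbig : ∀ x, 𝔠 ≤ #(e x) := by
    intro x
    obtain ⟨f, hrange, -, hinj⟩ :=
      (e₀ x).2.1.exists_nat_bool_injection_of_not_countable (e₀ x).2.2
    calc 𝔠 = #(ℕ → Bool) := hι.symm
    _ = #(Set.range f) := (Cardinal.mk_range_eq f hinj).symm
    _ ≤ #(e x) := Cardinal.mk_le_mk_of_subset hrange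
  -- the countable dense set of rational points
  set D : Set (Fin n → ℝ) := Set.range (fun q : Fin n → ℚ => fun i => (q i : ℝ)) with hDdef
  have hD : #D ≤ ℵ₀ := by
    haveI := (Set.countable_range (fun q : Fin n → ℚ => fun i => (q i : ℝ))).to_subtype
    exact Cardinal.mk_le_aleph0
  have hDdense : Dense D := by
    have hDeq : D = Set.univ.pi (fun _ : Fin n => Set.range ((↑) : ℚ → ℝ)) := by
      ext v
      simp only [hDdef, Set.mem_range, Set.mem_pi, Set.mem_univ, forall_true_left]
      constructor
      · rintro ⟨q, rfl⟩ i
        exact ⟨q i, rfl⟩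
      · intro h
        choose q hq using h
        exact ⟨q, funext hq⟩
    rw [hDeq]
    exact dense_pi _ (fun i _ => Rat.denseRange_cast)
  -- run the transfinite construction
  have inv := inv_all r e D hD hsmall hbig
  set Atot : Set (Fin n → ℝ) := {v | ∃ w, (bern r e D w).1 = v} with hAtot
  refine ⟨(span ℚ (D ∪ Atot)).toAddSubgroup, ?_, ?_⟩
  · rw [Submodule.coe_toAddSubgroup]
    exact hDdense.mono (subset_trans Set.subset_union_left subset_span)
  · intro F hF hFc
    obtain ⟨x, hx⟩ := hesurj ⟨F, hF, hFc⟩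
    have hex : e x = F := by show ((e₀ x : T) : Set (Fin n → ℝ)) = F; rw [hx]
    have hInv := inv x
    constructor
    · refine ⟨(bern r e D x).1, ?_, ?_⟩
      · show (bern r e D x).1 ∈ span ℚ (D ∪ Atot)
        exact subset_span (Or.inr ⟨x, rfl⟩)
      · rw [← hex]; exact hInv.1
    · refine ⟨(bern r e D x).2, ?_, ?_⟩
      · intro hmem
        have hmem' : (bern r e D x).2 ∈ span ℚ (D ∪ Atot) := hmem
        have hkey := not_mem_span r e D (fun _ => True) (fun z _ => inv z) x trivial
        refine hkey ?_
        have : {v | ∃ w, True ∧ (bern r e D w).1 = v} = Atot := by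
          ext v; simp [hAtot]
        rwa [this]
      · rw [← hex]; exact hInv.2.1
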